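/- Let A, B ∈ S^n with A ≠ B, and suppose the map z ↦ ff_-(z,B) = {u ∈ ℝ^{n-1} : (u,z)ᵀ B (u,z) ≤ 0} is lower semicontinuous at z = 0 on [0,1]. Then ff_-(1,B) ⊆ ff_+(1,A) if and only if J_-(B) ⊆ J_+(A), where ff_+(1,A) = {u : (u,1)ᵀ A (u,1) ≥ 0}, J_-(B) = {X ∈ S^n_+ : ⟨B,X⟩ ≤ 0}, and J_+(A) = {X ∈ S^n_+ : ⟨A,X⟩ ≥ 0}. -/

import Mathlib

open Matrix

/-- q(u,z,B) = (u,z)ᵀ B (u,z). -/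
def qform {m : ℕ} (u : Fin m → ℝ) (z : ℝ) (B : Matrix (Fin (m + 1)) (Fin (m + 1)) ℝ) : ℝ :=
  (Fin.snoc u z : Fin (m + 1) → ℝ) ⬝ᵥ B.mulVec (Fin.snoc u z)

/-- ff_-(z,B) = {u : q(u,z,B) ≤ 0}. -/
def ffm {m : ℕ} (z : ℝ) (B : Matrix (Fin (m + 1)) (Fin (m + 1)) ℝ) : Set (Fin m → ℝ) :=
  {u | qform u z B ≤ 0}

/-- ff_+(z,A) = {u : q(u,z,A) ≥ 0}. -/
def ffp {m : ℕ} (z : ℝ) (A : Matrix (Fin (m + 1)) (Fin (m + 1)) ℝ) : Set (Fin m → ℝ) :=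
  {u | 0 ≤ qform u z A}

/-- J_-(B) = {X ∈ S^n_+ : ⟨B,X⟩ ≤ 0}. -/
def Jm {k : ℕ} (B : Matrix (Fin k) (Fin k) ℝ) : Set (Matrix (Fin k) (Fin k) ℝ) :=
  {X | X.PosSemidef ∧ (B * X).trace ≤ 0}

/-- J_+(A) = {X ∈ S^n_+ : ⟨A,X⟩ ≥ 0}. -/
def Jp {k : ℕ} (A : Matrix (Fin k) (Fin k) ℝ) : Set (Matrix (Fin k) (Fin k) ℝ) :=
  {X | X.PosSemidef ∧ 0 ≤ (A * X).trace}

def qv {k : ℕ} (M : Matrix (Fin k) (Fin k) ℝ) (v : Fin k → ℝ) : ℝ := v ⬝ᵥ M.mulVec v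

lemma qv_comb {k : ℕ} (M : Matrix (Fin k) (Fin k) ℝ) (u w : Fin k → ℝ) (c s : ℝ) :
    qv M (c • u + s • w) = c^2 * qv M u + c*s*(u ⬝ᵥ M.mulVec w + w ⬝ᵥ M.mulVec u) + s^2 * qv M w := by
  simp [qv, Matrix.mulVec_add, Matrix.mulVec_smul, add_dotProduct, smul_dotProduct,
    dotProduct_add, dotProduct_smul, smul_eq_mul]
  ring

lemma qv_smul {k : ℕ} (M : Matrix (Fin k) (Fin k) ℝ) (u : Fin k → ℝ) (c : ℝ) :
    qv M (c • u) = c^2 * qv M u := by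
  simp [qv, Matrix.mulVec_smul, smul_dotProduct, dotProduct_smul, smul_eq_mul]; ring

lemma continuous_qv {k : ℕ} (M : Matrix (Fin k) (Fin k) ℝ) : Continuous (qv M) := by
  unfold qv dotProduct Matrix.mulVec
  exact continuous_finset_sum _ fun i _ => (continuous_apply i).mul
    (continuous_finset_sum _ fun j _ => (continuous_const.mul (continuous_apply j)))

lemma trace_eq_sum_qv {k : ℕ} (M C : Matrix (Fin k) (Fin k) ℝ) :
    (M * (Cᵀ * C)).trace = ∑ i, qv M (C i) := by
  rw [← Matrix.mul_assoc, Matrix.trace_mul_comm]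
  simp [Matrix.trace, Matrix.mul_apply, Matrix.diag, qv, dotProduct, Matrix.mulVec,
    Finset.mul_sum, Finset.sum_mul]

lemma rotate_exists {k : ℕ} (B : Matrix (Fin k) (Fin k) ℝ) (u w : Fin k → ℝ)
    (hu : 0 < qv B u) (hw : qv B w < 0) :
    ∃ c s : ℝ, c^2 + s^2 = 1 ∧ qv B (c • u + s • w) = 0 := by
  have hcont : Continuous fun θ : ℝ => qv B (Real.cos θ • u + Real.sin θ • w) := by
    exact (continuous_qv B).comp
      (((Real.continuous_cos.smul continuous_const)).add
        ((Real.continuous_sin.smul continuous_const)))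
  have h0 : (fun θ : ℝ => qv B (Real.cos θ • u + Real.sin θ • w)) 0 = qv B u := by
    simp
  have hpi : (fun θ : ℝ => qv B (Real.cos θ • u + Real.sin θ • w)) (Real.pi/2) = qv B w := by
    simp [Real.cos_pi_div_two, Real.sin_pi_div_two]
  have hmem : (0:ℝ) ∈ Set.Icc ((fun θ : ℝ => qv B (Real.cos θ • u + Real.sin θ • w)) (Real.pi/2))
      ((fun θ : ℝ => qv B (Real.cos θ • u + Real.sin θ • w)) 0) := by
    rw [h0, hpi]; exact ⟨hw.le, hu.le⟩
  obtain ⟨θ, _, hθ⟩ := intermediate_value_Icc' (by positivity : (0:ℝ) ≤ Real.pi/2)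
    hcont.continuousOn hmem
  exact ⟨Real.cos θ, Real.sin θ, by rw [← Real.sin_sq_add_cos_sq θ]; ring, hθ⟩

lemma rotate_sum {k : ℕ} (M : Matrix (Fin k) (Fin k) ℝ) (u w : Fin k → ℝ) {c s : ℝ}
    (hcs : c^2 + s^2 = 1) :
    qv M (c • u + s • w) + qv M ((-s) • u + c • w) = qv M u + qv M w := by
  rw [qv_comb, qv_comb]
  linear_combination (qv M u + qv M w) * hcs

lemma multiset_key {k : ℕ} (A B : Matrix (Fin k) (Fin k) ℝ)
    (hv : ∀ v, qv B v ≤ 0 → 0 ≤ qv A v) :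
    ∀ n : ℕ, ∀ s : Multiset (Fin k → ℝ), s.card = n →
      (s.map (qv B)).sum ≤ 0 → 0 ≤ (s.map (qv A)).sum := by
  intro n
  induction n with
  | zero => intro s hc _; rw [Multiset.card_eq_zero] at hc; simp [hc]
  | succ n ih =>
    intro s hc hs
    by_cases hall : ∀ v ∈ s, qv B v ≤ 0
    · refine Multiset.sum_nonneg ?_
      intro x hx
      obtain ⟨v, hv', rfl⟩ := Multiset.mem_map.mp hx
      exact hv v (hall v hv')
    · push_neg at hall
      obtain ⟨u, hu, huB⟩ := hall
      have hse : s = u ::ₘ s.erase u := (Multiset.cons_erase hu).symm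
      set t := s.erase u with ht
      have hts : (t.map (qv B)).sum < 0 := by
        have : (s.map (qv B)).sum = qv B u + (t.map (qv B)).sum := by
          rw [hse]; simp
        linarith
      have hw : ∃ w ∈ t, qv B w < 0 := by
        by_contra hcon
        push_neg at hcon
        have : 0 ≤ (t.map (qv B)).sum := Multiset.sum_nonneg (by
          intro x hx; obtain ⟨v, hv', rfl⟩ := Multiset.mem_map.mp hx; exact hcon v hv')
        linarith
      obtain ⟨w, hwt, hwB⟩ := hw
      set r := t.erase w with hr
      have hte : t = w ::ₘ r := (Multiset.cons_erase hwt).symm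
      obtain ⟨c, sn, hcs, hzero⟩ := rotate_exists B u w huB hwB
      set v1 := c • u + sn • w with hv1
      set v2 := (-sn) • u + c • w with hv2
      have hsumB : qv B v1 + qv B v2 = qv B u + qv B w := rotate_sum B u w hcs
      have hsumA : qv A v1 + qv A v2 = qv A u + qv A w := rotate_sum A u w hcs
      -- new multiset v2 ::ₘ r has card n
      have hcard : (v2 ::ₘ r).card = n := by
        have h1 : t.card = n := by
          have := hc; rw [hse] at this; simpa using this
        have : r.card = n - 1 := by rw [hr, Multiset.card_erase_of_mem hwt, h1]; exact Nat.pred_eq_sub_one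
        have hn1 : 1 ≤ n := by
          by_contra h; push_neg at h; interval_cases n
          · rw [Multiset.card_eq_zero] at h1; rw [h1] at hwt; simp at hwt
        rw [Multiset.card_cons, this]; omega
      have hnewB : ((v2 ::ₘ r).map (qv B)).sum ≤ 0 := by
        have hts' : (t.map (qv B)).sum = qv B w + (r.map (qv B)).sum := by rw [hte]; simp
        simp only [Multiset.map_cons, Multiset.sum_cons]
        have hsB : (s.map (qv B)).sum = qv B u + qv B w + (r.map (qv B)).sum := by
          rw [hse]; simp [hts']; ring
        have : qv B v2 = qv B u + qv B w - qv B v1 := by linarith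
        rw [this, hzero] at *
        linarith
      have hih := ih _ hcard hnewB
      have hA1 : 0 ≤ qv A v1 := hv v1 (le_of_eq hzero)
      have hsA : (s.map (qv A)).sum = qv A u + qv A w + (r.map (qv A)).sum := by
        rw [hse, hte]; simp; ring
      have : ((v2 ::ₘ r).map (qv A)).sum = qv A v2 + (r.map (qv A)).sum := by simp
      rw [hsA]
      rw [this] at hih
      linarith

lemma snoc_smul {m : ℕ} (u : Fin m → ℝ) (z c : ℝ) :
    (Fin.snoc (c • u) (c * z) : Fin (m+1) → ℝ) = c • (Fin.snoc u z : Fin (m+1) → ℝ) := by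
  funext i
  refine Fin.lastCases ?_ (fun j => ?_) i <;>
    simp [Fin.snoc_last, Fin.snoc_castSucc]

lemma continuous_qform {m : ℕ} (A : Matrix (Fin (m+1)) (Fin (m+1)) ℝ) :
    Continuous (fun p : (Fin m → ℝ) × ℝ => qform p.1 p.2 A) := by
  have hsnoc : Continuous (fun p : (Fin m → ℝ) × ℝ => (Fin.snoc p.1 p.2 : Fin (m+1) → ℝ)) := by
    refine continuous_pi fun i => ?_
    refine Fin.lastCases ?_ (fun j => ?_) i
    · simp only [Fin.snoc_last]; exact continuous_snd
    · simp only [Fin.snoc_castSucc]; exact (continuous_apply j).comp continuous_fst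
  exact (continuous_qv A).comp hsnoc

lemma hpos_lemma {m : ℕ} (A B : Matrix (Fin (m+1)) (Fin (m+1)) ℝ)
    (hsub : ffm 1 B ⊆ ffp 1 A) (u : Fin m → ℝ) (z : ℝ) (hz : 0 < z)
    (h : qform u z B ≤ 0) : 0 ≤ qform u z A := by
  have hz' : z ≠ 0 := ne_of_gt hz
  have hsn : (Fin.snoc (z⁻¹ • u) 1 : Fin (m+1) → ℝ) = z⁻¹ • (Fin.snoc u z : Fin (m+1) → ℝ) := by
    rw [← snoc_smul]; field_simp
  have hB : qform (z⁻¹ • u) 1 B ≤ 0 := by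
    show qv B _ ≤ 0
    rw [hsn, qv_smul]
    exact mul_nonpos_of_nonneg_of_nonpos (sq_nonneg _) h
  have hA : 0 ≤ qform (z⁻¹ • u) 1 A := hsub hB
  have hA' : (0:ℝ) ≤ (z⁻¹)^2 * qv A (Fin.snoc u z) := by
    rw [← qv_smul, ← hsn]; exact hA
  have h2 : (0:ℝ) < (z⁻¹)^2 := by positivity
  show (0:ℝ) ≤ qv A (Fin.snoc u z)
  nlinarith

lemma homog {m : ℕ} (A B : Matrix (Fin (m+1)) (Fin (m+1)) ℝ)
    (hsub : ffm 1 B ⊆ ffp 1 A)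
    (hlsc : ∀ W : Set (Fin m → ℝ), IsOpen W → (W ∩ ffm 0 B).Nonempty →
      ∃ ε : ℝ, 0 < ε ∧ ε ≤ 1 ∧ ∀ z : ℝ, 0 ≤ z → z < ε → (W ∩ ffm z B).Nonempty) :
    ∀ v : Fin (m+1) → ℝ, qv B v ≤ 0 → 0 ≤ qv A v := by
  intro v hv
  have hvs : (Fin.snoc (Fin.init v) (v (Fin.last m)) : Fin (m+1) → ℝ) = v := Fin.snoc_init_self v
  set u := Fin.init v with hu
  set z := v (Fin.last m) with hz
  have hqB : qform u z B = qv B v := by rw [qform, hvs]; rfl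
  have hqA : qform u z A = qv A v := by rw [qform, hvs]; rfl
  rcases lt_trichotomy z 0 with hneg | hzero | hposz
  · -- use -v
    have hsn : (Fin.snoc ((-1 : ℝ) • u) ((-1) * z) : Fin (m+1) → ℝ)
        = (-1 : ℝ) • (Fin.snoc u z : Fin (m+1) → ℝ) := snoc_smul u z (-1)
    have hB' : qform ((-1 : ℝ) • u) ((-1) * z) B ≤ 0 := by
      show qv B _ ≤ 0
      rw [hsn, qv_smul]
      rw [hvs]
      nlinarith
    have := hpos_lemma A B hsub ((-1 : ℝ) • u) ((-1) * z) (by linarith) hB'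
    have h2 : (0:ℝ) ≤ qv A ((-1 : ℝ) • (Fin.snoc u z : Fin (m+1) → ℝ)) := by
      rw [← hsn]; exact this
    rw [qv_smul, hvs] at h2
    nlinarith
  · rw [← hqA]
    by_contra hcon
    push_neg at hcon
    -- qform u z A < 0, z = 0
    rw [hzero] at hcon hqB
    have hu0 : qform u 0 A < 0 := hcon
    have hS : IsOpen {p : (Fin m → ℝ) × ℝ | qform p.1 p.2 A < 0} :=
      isOpen_lt (continuous_qform A) continuous_const
    have hmem : ((u, (0:ℝ)) : (Fin m → ℝ) × ℝ) ∈ {p : (Fin m → ℝ) × ℝ | qform p.1 p.2 A < 0} := hu0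
    obtain ⟨δ, hδ, hball⟩ := Metric.isOpen_iff.mp hS (u, 0) hmem
    have hW : (Metric.ball u δ ∩ ffm 0 B).Nonempty := by
      refine ⟨u, Metric.mem_ball_self hδ, ?_⟩
      show qform u 0 B ≤ 0
      rw [hqB]; exact hv
    obtain ⟨ε, hε0, hε1, hε⟩ := hlsc _ Metric.isOpen_ball hW
    set z0 := min ε δ / 2 with hz0
    have hz0pos : 0 < z0 := by positivity
    obtain ⟨u', hu'W, hu'B⟩ := hε z0 hz0pos.le (by
      have h1 := min_le_left ε δ
      have h2 := min_le_right ε δ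
      simp only [hz0]
      linarith)
    have hinS : ((u', z0) : (Fin m → ℝ) × ℝ) ∈ Metric.ball ((u, (0:ℝ)) : (Fin m → ℝ) × ℝ) δ := by
      rw [Metric.mem_ball, Prod.dist_eq]
      apply max_lt
      · exact Metric.mem_ball.mp hu'W
      · rw [Real.dist_eq, sub_zero, abs_of_pos hz0pos]
        have h1 := min_le_left ε δ
        have h2 := min_le_right ε δ
        simp only [hz0]
        linarith
    have hAneg : qform u' z0 A < 0 := hball hinS
    have hApos : 0 ≤ qform u' z0 A := hpos_lemma A B hsub u' z0 hz0pos hu'B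
    linarith
  · rw [← hqA]
    exact hpos_lemma A B hsub u z hposz (by rw [hqB]; exact hv)

lemma trace_mul_vecMulVec {k : ℕ} (M : Matrix (Fin k) (Fin k) ℝ) (v : Fin k → ℝ) :
    (M * Matrix.vecMulVec v v).trace = qv M v := by
  simp [Matrix.trace, Matrix.mul_apply, Matrix.diag, Matrix.vecMulVec_apply, qv,
    dotProduct, Matrix.mulVec, Finset.mul_sum]
  exact Finset.sum_congr rfl fun i _ => Finset.sum_congr rfl fun j _ => by ring

lemma posSemidef_vecMulVec' {k : ℕ} (v : Fin k → ℝ) : (Matrix.vecMulVec v v).PosSemidef := by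
  refine Matrix.PosSemidef.of_dotProduct_mulVec_nonneg ?_ ?_
  · ext i j
    simp [Matrix.vecMulVec_apply, Matrix.conjTranspose_apply, mul_comm]
  · intro x
    have h : star x ⬝ᵥ (Matrix.vecMulVec v v) *ᵥ x = (v ⬝ᵥ x) * (v ⬝ᵥ x) := by
      simp [dotProduct, Matrix.mulVec, Matrix.vecMulVec_apply, Finset.mul_sum,
        Finset.sum_mul, mul_assoc]
      rw [Finset.sum_comm]
      exact Finset.sum_congr rfl fun i _ => Finset.sum_congr rfl fun j _ => by ring
    rw [h]
    exact mul_self_nonneg _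

theorem stmt15 {m : ℕ} (A B : Matrix (Fin (m + 1)) (Fin (m + 1)) ℝ)
    (hA : A.IsSymm) (hB : B.IsSymm) (hAB : A ≠ B)
    (hlsc : ∀ W : Set (Fin m → ℝ), IsOpen W → (W ∩ ffm 0 B).Nonempty →
      ∃ ε : ℝ, 0 < ε ∧ ε ≤ 1 ∧ ∀ z : ℝ, 0 ≤ z → z < ε → (W ∩ ffm z B).Nonempty) :
    ffm 1 B ⊆ ffp 1 A ↔ Jm B ⊆ Jp A := by
  constructor
  · intro hsub X hX
    obtain ⟨hXpsd, hXB⟩ := hX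
    open scoped MatrixOrder Matrix.Norms.L2Operator in
    obtain ⟨C, hC⟩ := CStarAlgebra.nonneg_iff_eq_star_mul_self.mp hXpsd.nonneg
    rw [Matrix.star_eq_conjTranspose, Matrix.conjTranspose_eq_transpose_of_trivial] at hC
    subst hC
    refine ⟨hXpsd, ?_⟩
    rw [trace_eq_sum_qv] at hXB ⊢
    have hv := homog A B hsub hlsc
    have eB : (((Finset.univ.val : Multiset (Fin (m+1))).map C).map (qv B)).sum
        = ∑ i, qv B (C i) := by erw [Multiset.map_map]; rfl
    have eA : (((Finset.univ.val : Multiset (Fin (m+1))).map C).map (qv A)).sum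
        = ∑ i, qv A (C i) := by erw [Multiset.map_map]; rfl
    have key := multiset_key A B hv (Multiset.card ((Finset.univ.val : Multiset (Fin (m+1))).map C))
      _ rfl (by rw [eB]; exact hXB)
    rw [eA] at key
    exact key
  · intro hJ u hu
    have hmem : Matrix.vecMulVec (Fin.snoc u 1 : Fin (m+1) → ℝ) (Fin.snoc u 1) ∈ Jm B := by
      refine ⟨posSemidef_vecMulVec' _, ?_⟩
      rw [trace_mul_vecMulVec]
      exact hu
    have := (hJ hmem).2
    rw [trace_mul_vecMulVec] at this
    exact this
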